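/- arXiv:2605.28529 — 2 statements merged into one kernel-verified Lean document; each statement's English description precedes it below -/
import Mathlib

section
/- Every graph null player in a communication situation (N, v, Γ) is a null player in the graph-restricted game (N, v^Γ): if i is a graph null player, then v^Γ(S ∪ {i}) = v^Γ(S) for all S ⊆ N∖{i}. -/
open Finset

noncomputable section
open scoped Classical

namespace TUGame

variable {ι : Type*} [Fintype ι] [DecidableEq ι]

/-- Harsanyi dividend of coalition `T` in game `v`. -/
def dividend (v : Finset ι → ℝ) (T : Finset ι) : ℝ :=
  ∑ R ∈ T.powerset, (-1 : ℝ) ^ (T.card - R.card) * v R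

/-- Unanimity game of coalition `T`. -/
def unanimity (T S : Finset ι) : ℝ := if T ⊆ S then 1 else 0

/-- Shapley value of player `i` in game `v`. -/
def shapley (v : Finset ι → ℝ) (i : ι) : ℝ :=
  ∑ S ∈ Finset.univ.powerset.filter (fun S => i ∈ S),
    (((S.card - 1).factorial * (Fintype.card ι - S.card).factorial : ℕ) : ℝ) /
      (((Fintype.card ι).factorial : ℕ) : ℝ) * (v S - v (S.erase i))

/-- Shapley interaction index, defined via discrete derivatives. -/
def SIderiv (v : Finset ι → ℝ) (S : Finset ι) : ℝ :=
  ∑ T ∈ (Finset.univ \ S).powerset,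
    (((Fintype.card ι - T.card - S.card).factorial * T.card.factorial : ℕ) : ℝ) /
      (((Fintype.card ι - S.card + 1).factorial : ℕ) : ℝ) *
    ∑ L ∈ S.powerset, (-1 : ℝ) ^ (S.card - L.card) * v (T ∪ L)

/-- Shapley interaction index, expressed via Harsanyi dividends. -/
def SIdiv (v : Finset ι → ℝ) (S : Finset ι) : ℝ :=
  ∑ T ∈ Finset.univ.powerset.filter (fun T => S ⊆ T),
    dividend v T / ((T.card - S.card + 1 : ℕ) : ℝ)

/-- The subgraph of `G` induced by the coalition `S` (as a graph on the same vertex set). -/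
def restrict (G : SimpleGraph ι) (S : Finset ι) : SimpleGraph ι where
  Adj i j := G.Adj i j ∧ i ∈ S ∧ j ∈ S
  symm := ⟨fun i j h => ⟨h.1.symm, h.2.2, h.2.1⟩⟩
  loopless := ⟨fun i h => G.loopless.irrefl i h.1⟩

/-- Connected component of `i` in the subgraph induced by `S`. -/
def comp (G : SimpleGraph ι) (S : Finset ι) (i : ι) : Finset ι :=
  S.filter fun j => (restrict G S).Reachable i j

/-- Connected component of `i` in `G`. -/
def component (G : SimpleGraph ι) (i : ι) : Finset ι := comp G Finset.univ i

/-- Myerson graph-restricted game: sum of `v` over the connected components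
of the subgraph induced by `S`. -/
def restrictedGame (G : SimpleGraph ι) (v : Finset ι → ℝ) (S : Finset ι) : ℝ :=
  ∑ C ∈ S.image (comp G S), v C

/-- Myerson interaction index. -/
def MI (G : SimpleGraph ι) (v : Finset ι → ℝ) (S : Finset ι) : ℝ :=
  SIdiv (restrictedGame G v) S

/-- The subgraph induced by `S` is connected. -/
def ConnectedOn (G : SimpleGraph ι) (S : Finset ι) : Prop :=
  ∀ i ∈ S, ∀ j ∈ S, (restrict G S).Reachable i j

/-- `R` is a minimal `T`-connecting set of nodes in `G`. -/
def MinimalConnecting (G : SimpleGraph ι) (T R : Finset ι) : Prop :=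
  T ⊆ R ∧ ConnectedOn G R ∧ ∀ R' ⊂ R, ¬ (T ⊆ R' ∧ ConnectedOn G R')

/-- `i` is an intermediary of `T` in `G`. -/
def Intermediary (G : SimpleGraph ι) (T : Finset ι) (i : ι) : Prop :=
  ∃ R, MinimalConnecting G T R ∧ i ∈ R ∧ i ∉ T

/-- `i` is an essential intermediary of `T` in `G`. -/
def EssentialIntermediary (G : SimpleGraph ι) (T : Finset ι) (i : ι) : Prop :=
  i ∉ T ∧ ∀ R, MinimalConnecting G T R → i ∈ R

/-- `i` is a null player in game `v`. -/
def NullPlayer (v : Finset ι → ℝ) (i : ι) : Prop :=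
  ∀ S : Finset ι, i ∉ S → v (insert i S) = v S

/-- `i` is a graph null player in the communication situation `(N, v, G)`. -/
def GraphNull (G : SimpleGraph ι) (v : Finset ι → ℝ) (i : ι) : Prop :=
  NullPlayer v i ∧
    ∀ j k : ι, j ≠ k → j ≠ i → k ≠ i → Intermediary G {j, k} i →
      NullPlayer v j ∨ NullPlayer v k

/-- `P` is a veto partnership in game `v`. -/
def VetoPartnership (v : Finset ι → ℝ) (P : Finset ι) : Prop :=
  P.Nonempty ∧ ∀ T : Finset ι, T ⊆ Finset.univ \ P →
    v T = 0 ∧ ∀ S ⊂ P, v (T ∪ S) = 0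

/-- `GP` is a veto graph partnership in `(N, v, G)`. -/
def VetoGraphPartnership (G : SimpleGraph ι) (v : Finset ι → ℝ) (GP : Finset ι) : Prop :=
  GP.Nonempty ∧ ∃ P, VetoPartnership v P ∧
    ∀ i ∈ GP, i ∈ P ∨ EssentialIntermediary G P i

/-- Cutnodes of `S`: nodes of `S` whose removal disconnects the induced subgraph on `S`. -/
def cutnodes (G : SimpleGraph ι) (S : Finset ι) : Finset ι :=
  S.filter fun i => ¬ ConnectedOn G (S.erase i)

end TUGame

open TUGame

section AuxLemmas

variable {ι : Type*} [Fintype ι] [DecidableEq ι]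

lemma restrict_mono' (G : SimpleGraph ι) {R S : Finset ι} (h : R ⊆ S) :
    restrict G R ≤ restrict G S := by
  intro a b hab
  exact ⟨hab.1, h hab.2.1, h hab.2.2⟩

lemma mem_comp' {G : SimpleGraph ι} {S : Finset ι} {i j : ι} :
    j ∈ comp G S i ↔ j ∈ S ∧ (restrict G S).Reachable i j := Finset.mem_filter

lemma comp_subset' (G : SimpleGraph ι) (S : Finset ι) (i : ι) : comp G S i ⊆ S :=
  Finset.filter_subset _ _

lemma mem_comp_self' {G : SimpleGraph ι} {S : Finset ι} {i : ι} (h : i ∈ S) :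
    i ∈ comp G S i := mem_comp'.2 ⟨h, SimpleGraph.Reachable.refl i⟩

lemma comp_eq' {G : SimpleGraph ι} {S : Finset ι} {j k : ι}
    (h : (restrict G S).Reachable j k) : comp G S j = comp G S k := by
  ext x
  simp only [mem_comp']
  exact and_congr_right fun _ => ⟨fun hx => h.symm.trans hx, fun hx => h.trans hx⟩

lemma walk_support_mem' {G : SimpleGraph ι} {T : Finset ι} {a b : ι}
    (p : (restrict G T).Walk a b) (ha : a ∈ T) : ∀ x ∈ p.support, x ∈ T := by
  induction p with
  | nil =>
      intro x hx
      simp only [SimpleGraph.Walk.support_nil, List.mem_singleton] at hx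
      subst hx; exact ha
  | cons h q ih =>
      intro x hx
      rw [SimpleGraph.Walk.support_cons] at hx
      rcases List.mem_cons.1 hx with rfl | hx
      · exact ha
      · exact ih h.2.2 x hx

lemma walk_reach' {G : SimpleGraph ι} {T : Finset ι} {a b : ι}
    (p : (restrict G T).Walk a b) :
    ∀ x ∈ p.support, (restrict G p.support.toFinset).Reachable a x := by
  induction p with
  | nil =>
      intro x hx
      simp only [SimpleGraph.Walk.support_nil, List.mem_singleton] at hx
      subst hx; exact SimpleGraph.Reachable.refl _
  | @cons a c b h q ih =>
      intro x hx
      have hWsub : q.support.toFinset ⊆ (SimpleGraph.Walk.cons h q).support.toFinset := by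
        intro y hy
        rw [SimpleGraph.Walk.support_cons, List.toFinset_cons]
        exact Finset.mem_insert_of_mem hy
      have hcW : c ∈ (SimpleGraph.Walk.cons h q).support.toFinset := by
        rw [SimpleGraph.Walk.support_cons, List.toFinset_cons]
        exact Finset.mem_insert_of_mem (List.mem_toFinset.2 q.start_mem_support)
      have haW : a ∈ (SimpleGraph.Walk.cons h q).support.toFinset := by
        rw [SimpleGraph.Walk.support_cons, List.toFinset_cons]
        exact Finset.mem_insert_self _ _
      have hadj : (restrict G (SimpleGraph.Walk.cons h q).support.toFinset).Adj a c :=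
        ⟨h.1, haW, hcW⟩
      rw [SimpleGraph.Walk.support_cons] at hx
      rcases List.mem_cons.1 hx with rfl | hx
      · exact SimpleGraph.Reachable.refl _
      · exact hadj.reachable.trans
          (SimpleGraph.Reachable.mono (restrict_mono' G hWsub) (ih x hx))

lemma walk_connectedOn' {G : SimpleGraph ι} {T : Finset ι} {a b : ι}
    (p : (restrict G T).Walk a b) : ConnectedOn G p.support.toFinset := by
  intro x hx y hy
  rw [List.mem_toFinset] at hx hy
  exact (walk_reach' p x hx).symm.trans (walk_reach' p y hy)

lemma walk_avoid' {G : SimpleGraph ι} {S : Finset ι} {i : ι} {a b : ι}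
    (p : (restrict G (insert i S)).Walk a b) (hip : i ∉ p.support) (ha : a ∈ S) :
    (restrict G S).Reachable a b := by
  induction p with
  | nil => exact SimpleGraph.Reachable.refl _
  | @cons a c b h q ih =>
      rw [SimpleGraph.Walk.support_cons] at hip
      have hic : i ∉ q.support := fun hh => hip (List.mem_cons_of_mem _ hh)
      have hc : c ∈ S := by
        have h2 := h.2.2
        rw [Finset.mem_insert] at h2
        rcases h2 with rfl | hc
        · exact absurd q.start_mem_support hic
        · exact hc
      have hadj : (restrict G S).Adj a c := ⟨h.1, ha, hc⟩
      exact hadj.reachable.trans (ih hic hc)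

lemma v_union_null' (v : Finset ι → ℝ) {B : Finset ι} (hB : ∀ b ∈ B, NullPlayer v b) :
    ∀ T : Finset ι, Disjoint T B → v (T ∪ B) = v T := by
  induction B using Finset.induction_on with
  | empty => intro T _; rw [Finset.union_empty]
  | @insert b B hb ih =>
      intro T hdisj
      have hbT : b ∉ T := fun hh => (Finset.disjoint_left.1 hdisj hh) (Finset.mem_insert_self b B)
      have hbTB : b ∉ T ∪ B := by
        rw [Finset.mem_union]; rintro (hh | hh); exacts [hbT hh, hb hh]
      rw [Finset.union_insert, hB b (Finset.mem_insert_self b B) (T ∪ B) hbTB,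
        ih (fun x hx => hB x (Finset.mem_insert_of_mem hx)) T
          (hdisj.mono_right (Finset.subset_insert b B))]

lemma v_null_zero' (v : Finset ι → ℝ) (hv : v ∅ = 0) {B : Finset ι}
    (hB : ∀ b ∈ B, NullPlayer v b) : v B = 0 := by
  have := v_union_null' v hB ∅ (Finset.disjoint_left.2 (by simp))
  rw [Finset.empty_union, hv] at this
  exact this

end AuxLemmas

/-- every graph null player is a null player in the
graph-restricted game. -/
theorem graphNull_nullPlayer_restrictedGame {ι : Type*} [Fintype ι] [DecidableEq ι]
    (G : SimpleGraph ι) (v : Finset ι → ℝ) (hv : v ∅ = 0)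
    (i : ι) (h : GraphNull G v i) :
    NullPlayer (restrictedGame G v) i := by
  obtain ⟨hnull, hGN⟩ := h
  intro S hiS
  set A := insert i S with hA
  set C := comp G A i with hC
  have hiA : i ∈ A := Finset.mem_insert_self i S
  have hiC : i ∈ C := mem_comp_self' hiA
  have hCmemS : ∀ x ∈ C, x ≠ i → x ∈ S := by
    intro x hx hxi
    have := comp_subset' G A i hx
    rw [hA, Finset.mem_insert] at this
    tauto
  have hcompsub : ∀ j ∈ C, j ∈ S → comp G S j ⊆ C := by
    intro j hjC hjS x hx
    rw [mem_comp'] at hx ⊢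
    exact ⟨Finset.mem_insert_of_mem hx.1,
      (mem_comp'.1 hjC).2.trans
        (SimpleGraph.Reachable.mono (restrict_mono' G (Finset.subset_insert i S)) hx.2)⟩
  have hcompeq : ∀ j ∈ S, j ∉ C → comp G A j = comp G S j := by
    intro j hjS hjC
    ext x
    rw [mem_comp', mem_comp']
    constructor
    · rintro ⟨hxA, hr⟩
      obtain ⟨p⟩ := hr
      have hip : i ∉ p.support := by
        intro hip
        exact hjC (mem_comp'.2 ⟨Finset.mem_insert_of_mem hjS,
          (SimpleGraph.Walk.reachable (p.takeUntil i hip)).symm⟩)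
      have hxS : x ∈ S := by
        have hxm := p.end_mem_support
        have : x ∈ A := hxA
        rw [hA, Finset.mem_insert] at this
        rcases this with rfl | hh
        · exact absurd hxm hip
        · exact hh
      exact ⟨hxS, walk_avoid' p hip hjS⟩
    · rintro ⟨hxS, hr⟩
      exact ⟨Finset.mem_insert_of_mem hxS,
        SimpleGraph.Reachable.mono (restrict_mono' G (Finset.subset_insert i S)) hr⟩
  -- key intermediary fact
  have hkey : ∀ j ∈ C.erase i, ∀ k ∈ C.erase i, ¬ (restrict G S).Reachable j k →
      NullPlayer v j ∨ NullPlayer v k := by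
    intro j hj k hk hr
    rw [Finset.mem_erase] at hj hk
    have hjS : j ∈ S := hCmemS j hj.2 hj.1
    have hkS : k ∈ S := hCmemS k hk.2 hk.1
    have hjk : j ≠ k := by rintro rfl; exact hr (SimpleGraph.Reachable.refl j)
    have hreach : (restrict G A).Reachable j k :=
      (mem_comp'.1 hj.2).2.symm.trans (mem_comp'.1 hk.2).2
    obtain ⟨p⟩ := hreach
    set W := p.support.toFinset with hW
    have hjW : j ∈ W := List.mem_toFinset.2 p.start_mem_support
    have hkW : k ∈ W := List.mem_toFinset.2 p.end_mem_support
    have hWA : W ⊆ A := by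
      intro x hx
      exact walk_support_mem' p (Finset.mem_insert_of_mem hjS) x (List.mem_toFinset.1 hx)
    have hconnW : ConnectedOn G W := walk_connectedOn' p
    obtain ⟨R, hR, hmin⟩ := Finset.exists_min_image
      (W.powerset.filter fun R => ({j, k} : Finset ι) ⊆ R ∧ ConnectedOn G R) Finset.card
      ⟨W, by
        rw [Finset.mem_filter, Finset.mem_powerset]
        exact ⟨Finset.Subset.refl _, Finset.insert_subset hjW (Finset.singleton_subset_iff.2 hkW),
          hconnW⟩⟩
    rw [Finset.mem_filter, Finset.mem_powerset] at hR
    have hRmin : MinimalConnecting G {j, k} R := by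
      refine ⟨hR.2.1, hR.2.2, ?_⟩
      rintro R' hR' ⟨h1, h2⟩
      have hle := hmin R' (by
        rw [Finset.mem_filter, Finset.mem_powerset]
        exact ⟨hR'.subset.trans hR.1, h1, h2⟩)
      exact absurd (Finset.card_lt_card hR') (not_lt.2 hle)
    have hiR : i ∈ R := by
      by_contra hiR
      have hRS : R ⊆ S := by
        intro x hx
        have hxA := hWA (hR.1 hx)
        rw [hA, Finset.mem_insert] at hxA
        rcases hxA with rfl | hh
        · exact absurd hx hiR
        · exact hh
      exact hr (SimpleGraph.Reachable.mono (restrict_mono' G hRS)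
        (hR.2.2 j (hR.2.1 (Finset.mem_insert_self j {k})) k
          (hR.2.1 (Finset.mem_insert_of_mem (Finset.mem_singleton_self k)))))
    have hinotin : i ∉ ({j, k} : Finset ι) := by
      rw [Finset.mem_insert, Finset.mem_singleton]
      rintro (rfl | rfl)
      · exact hj.1 rfl
      · exact hk.1 rfl
    exact hGN j k hjk hj.1 hk.1 ⟨R, hRmin, hiR, hinotin⟩
  -- decomposition of component images
  have himA : A.image (comp G A) = insert C ((S \ C).image (comp G S)) := by
    ext D
    simp only [Finset.mem_image, Finset.mem_insert, Finset.mem_sdiff]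
    constructor
    · rintro ⟨j, hjA, rfl⟩
      by_cases hjC : j ∈ C
      · left; exact (comp_eq' (mem_comp'.1 hjC).2).symm
      · right
        have hjS : j ∈ S := by
          rw [hA, Finset.mem_insert] at hjA
          rcases hjA with rfl | hh
          · exact absurd hiC hjC
          · exact hh
        exact ⟨j, ⟨hjS, hjC⟩, (hcompeq j hjS hjC).symm⟩
    · rintro (rfl | ⟨j, ⟨hjS, hjC⟩, rfl⟩)
      · exact ⟨i, hiA, rfl⟩
      · exact ⟨j, Finset.mem_insert_of_mem hjS, hcompeq j hjS hjC⟩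
  have hSsplit : S = (C.erase i) ∪ (S \ C) := by
    ext x
    rw [Finset.mem_union, Finset.mem_erase, Finset.mem_sdiff]
    constructor
    · intro hx
      by_cases hxC : x ∈ C
      · exact Or.inl ⟨fun hh => hiS (hh ▸ hx), hxC⟩
      · exact Or.inr ⟨hx, hxC⟩
    · rintro (⟨hxi, hxC⟩ | ⟨hxS, _⟩)
      · exact hCmemS x hxC hxi
      · exact hxS
  have himS : S.image (comp G S) =
      (C.erase i).image (comp G S) ∪ (S \ C).image (comp G S) := by
    rw [← Finset.image_union, ← hSsplit]
  have hCnotout : C ∉ (S \ C).image (comp G S) := by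
    rw [Finset.mem_image]
    rintro ⟨j, hj, hjeq⟩
    obtain ⟨hjS, hjC⟩ := Finset.mem_sdiff.1 hj
    exact hjC (hjeq ▸ mem_comp_self' hjS)
  have hdisj : Disjoint ((C.erase i).image (comp G S)) ((S \ C).image (comp G S)) := by
    rw [Finset.disjoint_left]
    rintro D hD hD'
    obtain ⟨j, hj, rfl⟩ := Finset.mem_image.1 hD
    obtain ⟨k, hk, hkeq⟩ := Finset.mem_image.1 hD'
    obtain ⟨hji, hjC⟩ := Finset.mem_erase.1 hj
    obtain ⟨hkS, hkC⟩ := Finset.mem_sdiff.1 hk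
    have hksub : comp G S j ⊆ C := hcompsub j hjC (hCmemS j hjC hji)
    exact hkC (hksub (hkeq ▸ mem_comp_self' hkS))
  have hDin_sub : ∀ D ∈ (C.erase i).image (comp G S), D ⊆ C.erase i := by
    intro D hD
    obtain ⟨j, hj, rfl⟩ := Finset.mem_image.1 hD
    obtain ⟨hji, hjC⟩ := Finset.mem_erase.1 hj
    intro x hx
    refine Finset.mem_erase.2 ⟨?_, hcompsub j hjC (hCmemS j hjC hji) hx⟩
    intro hxi
    exact hiS (hxi ▸ comp_subset' G S j hx)
  -- reduce to the component containing i
  have hmain : v C = ∑ D ∈ (C.erase i).image (comp G S), v D := by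
    by_cases hall : ∀ x ∈ C.erase i, NullPlayer v x
    · have h1 : v C = 0 := by
        refine v_null_zero' v hv ?_
        intro x hx
        by_cases hxi : x = i
        · exact hxi ▸ hnull
        · exact hall x (Finset.mem_erase.2 ⟨hxi, hx⟩)
      rw [h1, Finset.sum_eq_zero]
      intro D hD
      exact v_null_zero' v hv fun b hb => hall b (hDin_sub D hD hb)
    · push_neg at hall
      obtain ⟨j0, hj0, hj0n⟩ := hall
      set D0 := comp G S j0 with hD0
      obtain ⟨hj0i, hj0C⟩ := Finset.mem_erase.1 hj0
      have hj0S : j0 ∈ S := hCmemS j0 hj0C hj0i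
      have hothernull : ∀ x ∈ C.erase i, x ∉ D0 → NullPlayer v x := by
        intro x hx hxD0
        have hxS : x ∈ S := hCmemS x (Finset.mem_erase.1 hx).2 (Finset.mem_erase.1 hx).1
        have hne : ¬ (restrict G S).Reachable j0 x := fun hr => hxD0 (mem_comp'.2 ⟨hxS, hr⟩)
        rcases hkey j0 hj0 x hx hne with hh | hh
        · exact absurd hh hj0n
        · exact hh
      have hD0subC : D0 ⊆ C := hcompsub j0 hj0C hj0S
      have hCnull2 : ∀ x ∈ C \ D0, NullPlayer v x := by
        intro x hx
        obtain ⟨hxC, hxD⟩ := Finset.mem_sdiff.1 hx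
        by_cases hxi : x = i
        · exact hxi ▸ hnull
        · exact hothernull x (Finset.mem_erase.2 ⟨hxi, hxC⟩) hxD
      have h1 : v C = v D0 := by
        have := v_union_null' v hCnull2 D0 Finset.disjoint_sdiff
        rwa [Finset.union_sdiff_of_subset hD0subC] at this
      have hD0mem : D0 ∈ (C.erase i).image (comp G S) := Finset.mem_image_of_mem _ hj0
      have h2 : ∀ D ∈ (C.erase i).image (comp G S), D ≠ D0 → v D = 0 := by
        intro D hD hne
        refine v_null_zero' v hv ?_
        intro y hy
        have hyE : y ∈ C.erase i := hDin_sub D hD hy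
        have hyD0 : y ∉ D0 := by
          intro hyD0
          obtain ⟨x, hx, rfl⟩ := Finset.mem_image.1 hD
          exact hne ((comp_eq' (mem_comp'.1 hy).2).trans (comp_eq' (mem_comp'.1 hyD0).2).symm)
        exact hothernull y hyE hyD0
      rw [h1, (Finset.sum_eq_single D0 h2 fun hh => absurd hD0mem hh).symm]
  -- put it together
  show restrictedGame G v A = restrictedGame G v S
  rw [restrictedGame, restrictedGame, himA, himS, Finset.sum_insert hCnotout,
    Finset.sum_union hdisj, hmain]
end
end

section
/- Every veto graph partnership in a communication situation (N, v, Γ) is a veto partnership in the graph-restricted game (N, v^Γ): if GP is a veto graph partnership, then v^Γ(T ∪ S) = 0 for all T ⊆ N∖GP and all proper subsets S ⊊ GP. -/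
open Finset

noncomputable section
open scoped Classical

namespace TUGame

variable {ι : Type*} [Fintype ι] [DecidableEq ι]

lemma comp_subset (G : SimpleGraph ι) (A : Finset ι) (i : ι) : comp G A i ⊆ A :=
  filter_subset _ _

lemma walk_in_comp (G : SimpleGraph ι) (A : Finset ι) (i : ι) :
    ∀ {j k : ι}, j ∈ comp G A i → (restrict G A).Walk j k →
      k ∈ comp G A i ∧ (restrict G (comp G A i)).Reachable j k := by
  intro j k hj w
  induction w with
  | nil => exact ⟨hj, SimpleGraph.Reachable.refl _⟩
  | @cons a b c h w ih =>
      have hb : b ∈ comp G A i := by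
        simp only [comp, mem_filter] at hj ⊢
        exact ⟨h.2.2, hj.2.trans (SimpleGraph.Adj.reachable h)⟩
      obtain ⟨hk, hr⟩ := ih hb
      exact ⟨hk, (SimpleGraph.Adj.reachable (show (restrict G (comp G A i)).Adj a b from
        ⟨h.1, hj, hb⟩)).trans hr⟩

lemma connectedOn_comp (G : SimpleGraph ι) (A : Finset ι) (i : ι) (hi : i ∈ A) :
    ConnectedOn G (comp G A i) := by
  have hic : i ∈ comp G A i := mem_filter.2 ⟨hi, SimpleGraph.Reachable.refl _⟩
  intro j hj k hk
  obtain ⟨wj⟩ := (mem_filter.1 hj).2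
  obtain ⟨wk⟩ := (mem_filter.1 hk).2
  exact ((walk_in_comp G A i hic wj).2).symm.trans (walk_in_comp G A i hic wk).2

lemma exists_minimalConnecting (G : SimpleGraph ι) (P : Finset ι) :
    ∀ C : Finset ι, P ⊆ C → ConnectedOn G C → ∃ R ⊆ C, MinimalConnecting G P R := by
  intro C
  induction C using Finset.strongInduction with
  | _ C ih =>
    intro hPC hC
    by_cases h : ∀ R' ⊂ C, ¬ (P ⊆ R' ∧ ConnectedOn G R')
    · exact ⟨C, subset_rfl, hPC, hC, h⟩
    · push_neg at h
      obtain ⟨R', hR', hPR', hCR'⟩ := h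
      obtain ⟨R, hRsub, hmin⟩ := ih R' hR' hPR' hCR'
      exact ⟨R, hRsub.trans hR'.subset, hmin⟩

end TUGame

open TUGame

/-- every veto graph partnership is a veto partnership in the
graph-restricted game. -/
theorem vetoGraphPartnership_restrictedGame {ι : Type*} [Fintype ι] [DecidableEq ι]
    (G : SimpleGraph ι) (v : Finset ι → ℝ) (GP : Finset ι)
    (h : VetoGraphPartnership G v GP) :
    ∀ T ⊆ Finset.univ \ GP, ∀ S ⊂ GP, restrictedGame G v (T ∪ S) = 0 := by
  obtain ⟨-, P, hP, hGP⟩ := h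
  intro T hT S hS
  unfold restrictedGame
  apply Finset.sum_eq_zero
  intro C hC
  obtain ⟨i, hiTS, rfl⟩ := mem_image.1 hC
  set A := T ∪ S with hA
  have hCsub : comp G A i ⊆ A := comp_subset G A i
  have hconn : ConnectedOn G (comp G A i) := connectedOn_comp G A i hiTS
  have hnP : ¬ P ⊆ comp G A i := by
    intro hPC
    obtain ⟨g, hgGP, hgS⟩ := exists_of_ssubset hS
    have hgA : g ∉ A := by
      simp only [hA, mem_union, not_or]
      refine ⟨fun hgT => ?_, hgS⟩
      have := hT hgT
      simp only [mem_sdiff] at this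
      exact this.2 hgGP
    rcases hGP g hgGP with hgP | hgE
    · exact hgA (hCsub (hPC hgP))
    · obtain ⟨R, hRsub, hmin⟩ := exists_minimalConnecting G P _ hPC hconn
      exact hgA (hCsub (hRsub (hgE.2 R hmin)))
  have hss : comp G A i ∩ P ⊂ P := by
    refine (inter_subset_right).ssubset_of_ne fun he => hnP ?_
    rw [← he]
    exact inter_subset_left
  have hv := (hP.2 (comp G A i \ P) ?_).2 (comp G A i ∩ P) hss
  · rwa [Finset.sdiff_union_inter] at hv
  · intro x hx
    simp only [mem_sdiff] at hx ⊢
    exact ⟨mem_univ x, hx.2⟩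
end
end
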